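/- Let P, N > 0 and ρ̃ ∈ [0,1). Then (1/4)·log₂( (2P(1+ρ̃) + N)/(N(1−ρ̃²)) ) ≤ (1/2)·log₂( (P(1−ρ̃²) + N)/(N(1−ρ̃²)) ), with equality if and only if P(1−ρ̃²) = Nρ̃. Equivalently, (P(1−ρ̃²)+N)² − N(1−ρ̃²)(2P(1+ρ̃)+N) = (P(1−ρ̃²) − Nρ̃)² ≥ 0. (In the symmetric case, the sum-rate constraint of Theorem 3 implies the individual rate constraints.) -/
import Mathlib


/-- In the symmetric case, the sum-rate constraint of Theorem 3 implies the individual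
rate constraints: `(1/4)log₂((2P(1+ρ̃)+N)/(N(1−ρ̃²))) ≤ (1/2)log₂((P(1−ρ̃²)+N)/(N(1−ρ̃²)))`,
with equality iff `P(1−ρ̃²) = Nρ̃`; equivalently the difference of the relevant squares is
the perfect square `(P(1−ρ̃²) − Nρ̃)² ≥ 0`. -/
theorem symmetric_sum_rate_implies_individual
    (P N ρt : ℝ) (hP : 0 < P) (hN : 0 < N) (hρt : ρt ∈ Set.Ico (0:ℝ) 1) :
    (1 / 4) * Real.logb 2 ((2 * P * (1 + ρt) + N) / (N * (1 - ρt ^ 2))) ≤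
        (1 / 2) * Real.logb 2 ((P * (1 - ρt ^ 2) + N) / (N * (1 - ρt ^ 2))) ∧
      ((1 / 4) * Real.logb 2 ((2 * P * (1 + ρt) + N) / (N * (1 - ρt ^ 2))) =
          (1 / 2) * Real.logb 2 ((P * (1 - ρt ^ 2) + N) / (N * (1 - ρt ^ 2))) ↔
        P * (1 - ρt ^ 2) = N * ρt) ∧
      (P * (1 - ρt ^ 2) + N) ^ 2 - N * (1 - ρt ^ 2) * (2 * P * (1 + ρt) + N) =
        (P * (1 - ρt ^ 2) - N * ρt) ^ 2 := by
  obtain ⟨hρ0, hρ1⟩ := hρt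
  have h1 : 0 < 1 - ρt ^ 2 := by nlinarith
  have hD : 0 < N * (1 - ρt ^ 2) := mul_pos hN h1
  set D : ℝ := N * (1 - ρt ^ 2) with hDdef
  set a : ℝ := 2 * P * (1 + ρt) + N with hadef
  set b : ℝ := P * (1 - ρt ^ 2) + N with hbdef
  have ha : 0 < a := by nlinarith
  have hb : 0 < b := by nlinarith
  have key : b ^ 2 - a * D = (P * (1 - ρt ^ 2) - N * ρt) ^ 2 := by
    rw [hadef, hbdef, hDdef]; ring
  have hA : 0 < a / D := div_pos ha hD
  have hB : 0 < b / D := div_pos hb hD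
  have hsq : a / D ≤ (b / D) ^ 2 := by
    rw [div_pow, div_le_div_iff₀ hD (by positivity)]
    nlinarith [sq_nonneg (P * (1 - ρt ^ 2) - N * ρt)]
  have hlog2 : Real.logb 2 ((b / D) ^ 2) = 2 * Real.logb 2 (b / D) := by
    rw [Real.logb_pow]; norm_num
  have h12 : (1:ℝ) < 2 := one_lt_two
  refine ⟨?_, ?_, by rw [hadef, hbdef, hDdef]; ring⟩
  · have := Real.logb_le_logb_of_le h12 hA hsq
    rw [hlog2] at this
    linarith
  · constructor
    · intro h
      have heq : Real.logb 2 (a / D) = Real.logb 2 ((b / D) ^ 2) := by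
        rw [hlog2]; linarith
      have : a / D = (b / D) ^ 2 :=
        Real.logb_injOn_pos h12 (Set.mem_Ioi.2 hA) (Set.mem_Ioi.2 (by positivity)) heq
      have h0 : b ^ 2 - a * D = 0 := by
        rw [div_pow, div_eq_div_iff hD.ne' (by positivity)] at this
        nlinarith
      rw [key] at h0
      have := pow_eq_zero_iff (n := 2) (by norm_num) |>.mp h0
      linarith
    · intro h
      have h0 : b ^ 2 = a * D := by
        have : (P * (1 - ρt ^ 2) - N * ρt) ^ 2 = 0 := by rw [← h]; ring
        linarith [key.symm ▸ this]
      have heq : a / D = (b / D) ^ 2 := by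
        rw [div_pow]
        field_simp
        nlinarith
      rw [heq, hlog2]
      ring
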